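/- Let β ≥ 2. For all q, q̃ ∈ ℝ² one has G(q̃) − G(q) − ∇G(q)·(q̃−q) ≥ (1/(β−1)) · max(|p(q)|^{β−2}, |p(q̃)|^{β−2}) · |p(q)−p(q̃)|², where |·| is the Euclidean norm on ℝ² and · is the Euclidean inner product. -/

import Mathlib

/-- `p(q) = (q₁⁻, q₂⁺)` where `t⁻ = max(-t,0)` and `t⁺ = max(t,0)`. -/
noncomputable def pmap (q : ℝ × ℝ) : ℝ × ℝ := (max (-q.1) 0, max q.2 0)

/-- Euclidean norm on `ℝ²`. -/
noncomputable def enorm (p : ℝ × ℝ) : ℝ := Real.sqrt (p.1 ^ 2 + p.2 ^ 2)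

/-- `G(q₁,q₂) = ((q₁⁻)² + (q₂⁺)²)^{β/2}`. -/
noncomputable def Gfun (β : ℝ) (q : ℝ × ℝ) : ℝ :=
  ((pmap q).1 ^ 2 + (pmap q).2 ^ 2) ^ (β / 2)

/-- The gradient `∇G(q) = β |p(q)|^{β-2} (-q₁⁻, q₂⁺)`. -/
noncomputable def gradG (β : ℝ) (q : ℝ × ℝ) : ℝ × ℝ :=
  (β * _root_.enorm (pmap q) ^ (β - 2) * (-(pmap q).1),
   β * _root_.enorm (pmap q) ^ (β - 2) * (pmap q).2)


open Set


/-- Engine: continuous on [A,B], differentiable inside, nonneg at endpoints and at critical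
points ⇒ nonneg on [A,B]. -/
lemma engine {f f' : ℝ → ℝ} {A B : ℝ} (hAB : A < B)
    (hc : ContinuousOn f (Icc A B))
    (hd : ∀ x ∈ Ioo A B, HasDerivAt f (f' x) x)
    (h0 : 0 ≤ f A) (h1 : 0 ≤ f B)
    (hcrit : ∀ x ∈ Ioo A B, f' x = 0 → 0 ≤ f x) :
    ∀ x ∈ Icc A B, 0 ≤ f x := by
  obtain ⟨c, hcm, hmin⟩ := (isCompact_Icc (a := A) (b := B)).exists_isMinOn
    (nonempty_Icc.2 hAB.le) hc
  intro x hx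
  have hfc : 0 ≤ f c := by
    rcases eq_or_lt_of_le hcm.1 with h | h
    · rwa [← h]
    rcases eq_or_lt_of_le hcm.2 with h2 | h2
    · rwa [h2]
    have hloc : IsLocalMin f c := hmin.isLocalMin (Icc_mem_nhds h h2)
    have := hloc.hasDerivAt_eq_zero (hd c ⟨h, h2⟩)
    exact hcrit c ⟨h, h2⟩ this
  exact le_trans hfc (hmin hx)

lemma rpow_split2 {s β : ℝ} (hs : 0 < s) : s ^ β = s ^ (β - 2) * s ^ 2 := by
  rw [show β = (β - 2) + 2 by ring, Real.rpow_add hs, Real.rpow_two]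
  ring_nf

lemma rpow_split1 {s β : ℝ} (hs : 0 < s) : s ^ (β - 1) = s ^ (β - 2) * s := by
  rw [show β - 1 = (β - 2) + 1 by ring, Real.rpow_add hs, Real.rpow_one]

lemma caseA {β s t : ℝ} (hβ : 2 ≤ β) (ht : 0 ≤ t) (hts : t ≤ s) :
    (s ^ (β - 2) / (β - 1)) * (t - s) ^ 2 ≤ t ^ β - s ^ β - β * s ^ (β - 1) * (t - s) := by
  have hb1 : (1 : ℝ) ≤ β - 1 := by linarith
  have hs0 : 0 ≤ s := le_trans ht hts
  rcases eq_or_lt_of_le hs0 with h | hs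
  · have ht0 : t = 0 := le_antisymm (h ▸ hts) ht
    subst ht0
    rw [← h]
    simp [Real.zero_rpow (by positivity : β ≠ 0),
      Real.zero_rpow (by linarith : β - 1 ≠ 0)]
  · set f : ℝ → ℝ := fun x =>
      x ^ β - s ^ β - β * s ^ (β - 1) * (x - s) - s ^ (β - 2) / (β - 1) * (x - s) ^ 2 with hf
    set f' : ℝ → ℝ := fun x =>
      β * x ^ (β - 1) - β * s ^ (β - 1) - s ^ (β - 2) / (β - 1) * (2 * (x - s)) with hf'
    have key : ∀ x ∈ Icc 0 s, 0 ≤ f x := by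
      apply engine (f' := f') hs
      · apply ContinuousOn.sub
        apply ContinuousOn.sub
        apply ContinuousOn.sub
        · exact (Real.continuous_rpow_const (by linarith)).continuousOn
        · exact continuousOn_const
        · exact (continuous_const.mul (continuous_id.sub continuous_const)).continuousOn
        · exact (continuous_const.mul ((continuous_id.sub continuous_const).pow 2)).continuousOn
      · intro x hx
        have h1 : HasDerivAt (fun x : ℝ => x ^ β) (β * x ^ (β - 1)) x :=
          Real.hasDerivAt_rpow_const (Or.inr (by linarith))
        have h2 : HasDerivAt (fun x : ℝ => β * s ^ (β - 1) * (x - s)) (β * s ^ (β - 1)) x := by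
          simpa using ((hasDerivAt_id x).sub_const s).const_mul (β * s ^ (β - 1))
        have h3 : HasDerivAt (fun x : ℝ => s ^ (β - 2) / (β - 1) * (x - s) ^ 2)
            (s ^ (β - 2) / (β - 1) * (2 * (x - s))) x := by
          have := (((hasDerivAt_id x).sub_const s).pow 2).const_mul (s ^ (β - 2) / (β - 1))
          simpa using this
        exact ((h1.sub_const (s ^ β)).sub h2).sub h3
      · have e0 : (0 : ℝ) ^ β = 0 := Real.zero_rpow (by positivity)
        have e1 := rpow_split1 (β := β) hs
        have e2 := rpow_split2 (β := β) hs
        have hA2 : 0 ≤ s ^ (β - 2) := Real.rpow_nonneg hs0 _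
        have hdiv : s ^ (β - 2) / (β - 1) ≤ s ^ (β - 2) := by
          rw [div_le_iff₀ (by linarith)]; nlinarith
        simp only [hf, e0]
        rw [e1, e2]
        nlinarith [mul_nonneg (sub_nonneg.2 hdiv) (sq_nonneg s),
          mul_nonneg hA2 (sq_nonneg s)]
      · simp [hf]
      · intro x hx hcx
        have hx0 : 0 < x := hx.1
        have hxs : x < s := hx.2
        have hb0 : 0 < β := by linarith
        have hxb : x ^ β = x ^ (β - 1) * x := by
          have h := Real.rpow_add hx0 (β - 1) 1
          rw [Real.rpow_one] at h
          rw [← h]; congr 1; ring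
        have hcrit : x ^ (β - 1) =
            s ^ (β - 1) + s ^ (β - 2) / (β - 1) * (2 * (x - s)) / β := by
          simp only [hf'] at hcx
          field_simp at hcx ⊢
          linarith
        have e1 := rpow_split1 (β := β) hs
        have e2 := rpow_split2 (β := β) hs
        have hA2 : 0 ≤ s ^ (β - 2) := Real.rpow_nonneg hs0 _
        have keyf : β * (β - 1) * f x =
            s ^ (β - 2) * ((s - x) * ((β - 2) * (β ^ 2 * s + x))) := by
          simp only [hf]
          rw [hxb, hcrit, e1, e2]
          field_simp
          ring
        have h4 : 0 ≤ β * (β - 1) * f x := by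
          rw [keyf]
          exact mul_nonneg hA2 (mul_nonneg (by linarith)
            (mul_nonneg (by linarith) (by nlinarith)))
        nlinarith [h4, mul_pos hb0 (show (0:ℝ) < β - 1 by linarith)]
    have := key t ⟨ht, hts⟩
    simp only [hf] at this
    linarith

lemma caseB {β s t : ℝ} (hβ : 2 ≤ β) (hs0 : 0 ≤ s) (hst : s ≤ t) :
    (t ^ (β - 2) / (β - 1)) * (t - s) ^ 2 ≤ t ^ β - s ^ β - β * s ^ (β - 1) * (t - s) := by
  have hb1 : (1 : ℝ) ≤ β - 1 := by linarith
  have ht0 : 0 ≤ t := le_trans hs0 hst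
  rcases eq_or_lt_of_le ht0 with h | ht
  · have hs' : s = 0 := le_antisymm (h ▸ hst) hs0
    subst hs'
    rw [← h]
    simp [Real.zero_rpow (by positivity : β ≠ 0),
      Real.zero_rpow (by linarith : β - 1 ≠ 0)]
  · set f : ℝ → ℝ := fun x =>
      t ^ β - x ^ β - β * (x ^ (β - 1) * (t - x)) - t ^ (β - 2) / (β - 1) * (t - x) ^ 2 with hf
    set f' : ℝ → ℝ := fun x =>
      (t - x) * (2 * t ^ (β - 2) / (β - 1) - β * (β - 1) * x ^ (β - 2)) with hf'
    have hB2 : 0 ≤ t ^ (β - 2) := Real.rpow_nonneg ht0 _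
    have key : ∀ x ∈ Icc 0 t, 0 ≤ f x := by
      apply engine (f' := f') ht
      · apply ContinuousOn.sub
        apply ContinuousOn.sub
        apply ContinuousOn.sub
        · exact continuousOn_const
        · exact (Real.continuous_rpow_const (by linarith)).continuousOn
        · exact (continuous_const.mul ((Real.continuous_rpow_const (by linarith)).mul
            (continuous_const.sub continuous_id))).continuousOn
        · exact (continuous_const.mul ((continuous_const.sub continuous_id).pow 2)).continuousOn
      · intro x hx
        have h1 : HasDerivAt (fun x : ℝ => x ^ β) (β * x ^ (β - 1)) x :=
          Real.hasDerivAt_rpow_const (Or.inr (by linarith))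
        have h2 : HasDerivAt (fun x : ℝ => x ^ (β - 1)) ((β - 1) * x ^ (β - 1 - 1)) x :=
          Real.hasDerivAt_rpow_const (Or.inr hb1)
        have h2' : HasDerivAt (fun x : ℝ => x ^ (β - 1)) ((β - 1) * x ^ (β - 2)) x := by
          convert h2 using 2; ring
        have h3 : HasDerivAt (fun x : ℝ => t - x) (-1) x := (hasDerivAt_id x).const_sub t
        have h4 : HasDerivAt (fun x : ℝ => β * (x ^ (β - 1) * (t - x)))
            (β * ((β - 1) * x ^ (β - 2) * (t - x) + x ^ (β - 1) * (-1))) x :=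
          (h2'.mul h3).const_mul β
        have h5 : HasDerivAt (fun x : ℝ => t ^ (β - 2) / (β - 1) * (t - x) ^ 2)
            (t ^ (β - 2) / (β - 1) * (2 * (t - x) * (-1))) x := by
          have := (h3.pow 2).const_mul (t ^ (β - 2) / (β - 1))
          simpa using this
        have hx0 : 0 < x := hx.1
        have hxb : x ^ β = x ^ (β - 1) * x := by
          have h := Real.rpow_add hx0 (β - 1) 1
          rw [Real.rpow_one] at h
          rw [← h]; congr 1; ring
        have hxb1 : x ^ (β - 1) = x ^ (β - 2) * x := rpow_split1 hx0
        have htot := ((h1.const_sub (t ^ β)).sub h4).sub h5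
        convert htot using 1
        · rfl
        · rfl
        show (t - x) * (2 * t ^ (β - 2) / (β - 1) - β * (β - 1) * x ^ (β - 2)) = _
        rw [hxb1]
        ring
        rfl
      · have e0 : (0 : ℝ) ^ β = 0 := Real.zero_rpow (by positivity)
        have e0' : (0 : ℝ) ^ (β - 1) = 0 := Real.zero_rpow (by linarith)
        have e2 : t ^ β = t ^ (β - 2) * t ^ 2 := rpow_split2 ht
        have hdiv : t ^ (β - 2) / (β - 1) ≤ t ^ (β - 2) := by
          rw [div_le_iff₀ (by linarith)]; nlinarith
        simp only [hf, e0, e0']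
        rw [e2]
        nlinarith [mul_nonneg (sub_nonneg.2 hdiv) (sq_nonneg t),
          mul_nonneg hB2 (sq_nonneg t)]
      · simp [hf]
      · intro x hx hcx
        have hx0 : 0 < x := hx.1
        have hxt : x < t := hx.2
        have hb0 : 0 < β := by linarith
        simp only [hf'] at hcx
        have hfac : 2 * t ^ (β - 2) / (β - 1) - β * (β - 1) * x ^ (β - 2) = 0 := by
          rcases mul_eq_zero.1 hcx with h | h
          · exfalso; linarith
          · exact h
        have hcrit : x ^ (β - 2) = 2 * t ^ (β - 2) / (β * (β - 1) ^ 2) := by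
          field_simp at hfac ⊢
          linarith
        have e1 : x ^ (β - 1) = x ^ (β - 2) * x := rpow_split1 hx0
        have e2 : x ^ β = x ^ (β - 2) * x ^ 2 := rpow_split2 hx0
        have e3 : t ^ β = t ^ (β - 2) * t ^ 2 := rpow_split2 ht
        have keyf : β * (β - 1) ^ 2 * f x =
            t ^ (β - 2) * ((β - 2) * ((β - 1) * (β * t ^ 2 - x ^ 2) + 2 * β * x * t)) := by
          simp only [hf]
          rw [e2, e1, e3, hcrit]
          field_simp
          ring
        have h4 : 0 ≤ β * (β - 1) ^ 2 * f x := by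
          rw [keyf]
          refine mul_nonneg hB2 (mul_nonneg (by linarith) ?_)
          nlinarith [mul_self_le_mul_self hx0.le hxt.le, mul_nonneg hx0.le ht0,
            sq_nonneg t, mul_pos hx0 ht]
        nlinarith [h4, mul_pos hb0 (mul_pos (show (0:ℝ) < β - 1 by linarith)
          (show (0:ℝ) < β - 1 by linarith))]
    have := key s ⟨hs0, hst⟩
    simp only [hf] at this
    linarith

lemma young2 {β x y : ℝ} (hβ : 2 ≤ β) (hx : 0 ≤ x) (hy : 0 ≤ y) :
    x ^ (β - 2) * y ^ 2 ≤ (β - 2) / β * x ^ β + 2 / β * y ^ β := by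
  have hb0 : β ≠ 0 := by positivity
  have h := Real.geom_mean_le_arith_mean2_weighted
    (w₁ := (β - 2) / β) (w₂ := 2 / β) (p₁ := x ^ β) (p₂ := y ^ β)
    (div_nonneg (by linarith) (by linarith)) (by positivity)
    (Real.rpow_nonneg hx β) (Real.rpow_nonneg hy β)
    (by field_simp; ring)
  have e1 : (x ^ β) ^ ((β - 2) / β) = x ^ (β - 2) := by
    rw [← Real.rpow_mul hx, show β * ((β - 2) / β) = β - 2 by field_simp]
  have e2 : (y ^ β) ^ ((2 : ℝ) / β) = y ^ 2 := by
    rw [← Real.rpow_mul hy, show β * (2 / β) = (2 : ℝ) by field_simp, Real.rpow_two]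
  rwa [e1, e2] at h

lemma caseD {β s t : ℝ} (hβ : 2 ≤ β) (hs0 : 0 ≤ s) (ht0 : 0 ≤ t) :
    (max s t) ^ (β - 2) * (s ^ 2 + t ^ 2) ≤ (β - 1) * (t ^ β + (β - 1) * s ^ β) := by
  have hb1 : (1 : ℝ) ≤ β - 1 := by linarith
  have hTB : 0 ≤ t ^ β := Real.rpow_nonneg ht0 _
  have hSB : 0 ≤ s ^ β := Real.rpow_nonneg hs0 _
  have hy1 : (β - 2) / β ≤ β - 2 := div_le_self (by linarith) (by linarith)
  have hy2 : (2 : ℝ) / β ≤ 1 := by rw [div_le_one (by linarith)]; linarith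
  rcases le_total s t with hst | hst
  · rw [max_eq_right hst]
    rcases eq_or_lt_of_le ht0 with h | ht
    · have hs' : s = 0 := le_antisymm (h ▸ hst) hs0
      subst hs'
      rw [← h]
      simp [Real.zero_rpow (by positivity : β ≠ 0)]
    · have hyg := young2 hβ ht0 hs0
      have e2 : t ^ β = t ^ (β - 2) * t ^ 2 := rpow_split2 ht
      nlinarith [mul_le_mul_of_nonneg_right hy1 hTB, mul_le_mul_of_nonneg_right hy2 hSB,
        mul_le_mul_of_nonneg_right (show (1:ℝ) ≤ (β-1)*(β-1) by nlinarith) hSB]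
  · rw [max_eq_left hst]
    rcases eq_or_lt_of_le hs0 with h | hs
    · have ht' : t = 0 := le_antisymm (h ▸ hst) ht0
      subst ht'
      rw [← h]
      simp [Real.zero_rpow (by positivity : β ≠ 0)]
    · have hyg := young2 hβ hs0 ht0
      have e2 : s ^ β = s ^ (β - 2) * s ^ 2 := rpow_split2 hs
      nlinarith [mul_le_mul_of_nonneg_right hy1 hSB, mul_le_mul_of_nonneg_right hy2 hTB,
        mul_le_mul_of_nonneg_right (show (1:ℝ) ≤ β - 1 by linarith) hTB,
        mul_le_mul_of_nonneg_right (show (1:ℝ) ≤ β - 1 by linarith) hSB]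

lemma STU {β s t u : ℝ} (hβ : 2 ≤ β) (hs : 0 ≤ s) (ht : 0 ≤ t)
    (hu : 0 ≤ u) (hust : u ≤ s * t) :
    (1 / (β - 1)) * max (s ^ (β - 2)) (t ^ (β - 2)) * (s ^ 2 + t ^ 2 - 2 * u) ≤
      t ^ β - s ^ β - β * s ^ (β - 2) * (u - s ^ 2) := by
  have hb1 : (1 : ℝ) ≤ β - 1 := by linarith
  have hb : (0 : ℝ) < β - 1 := by linarith
  have hmax : max (s ^ (β - 2)) (t ^ (β - 2)) = (max s t) ^ (β - 2) := by
    rcases le_total s t with h | h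
    · rw [max_eq_right h, max_eq_right (Real.rpow_le_rpow hs h (by linarith))]
    · rw [max_eq_left h, max_eq_left (Real.rpow_le_rpow ht h (by linarith))]
  rcases eq_or_lt_of_le hs with h0 | hs0
  · -- s = 0
    have hu0 : u = 0 := le_antisymm (by simpa [← h0] using hust) hu
    subst hu0
    rw [← h0]
    have e0 : (0 : ℝ) ^ β = 0 := Real.zero_rpow (by positivity)
    rcases eq_or_lt_of_le hβ with hb2 | hb2
    · -- β = 2
      rw [← hb2]
      norm_num [Real.rpow_two]
    · have e1 : (0 : ℝ) ^ (β - 2) = 0 := Real.zero_rpow (by linarith)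
      rw [e0, e1]
      rcases eq_or_lt_of_le ht with h1 | ht0
      · rw [← h1, e0, e1]; norm_num
      · have e2 : t ^ β = t ^ (β - 2) * t ^ 2 := rpow_split2 ht0
        have hB2 : 0 ≤ t ^ (β - 2) := Real.rpow_nonneg ht _
        rw [max_eq_right hB2, e2]
        rw [show (1/(β-1)) * t^(β-2) * (0^2 + t^2 - 2*0) = t^(β-2)*t^2/(β-1) by ring,
          div_le_iff₀ hb]
        nlinarith [mul_nonneg hB2 (sq_nonneg t)]
  · -- s > 0
    set A2 := s ^ (β - 2) with hA2def
    set M := (max s t) ^ (β - 2) with hMdef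
    have hA2 : 0 ≤ A2 := Real.rpow_nonneg hs _
    have hM : 0 ≤ M := Real.rpow_nonneg (le_trans hs (le_max_left s t)) _
    have e1 : s ^ (β - 1) = A2 * s := rpow_split1 hs0
    have e2 : s ^ β = A2 * s ^ 2 := rpow_split2 hs0
    have key : M * (s ^ 2 + t ^ 2 - 2 * u) ≤
        (β - 1) * (t ^ β - s ^ β - β * A2 * (u - s ^ 2)) := by
      rcases le_or_gt 0 (2 * M - β * (β - 1) * A2) with hc | hc
      · -- coefficient nonneg: compare with u = 0, use caseD
        have hD := caseD (s := s) (t := t) hβ hs ht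
        rw [← hMdef, e2] at hD
        have hcu := mul_nonneg hu hc
        nlinarith [hD, hcu]
      · -- coefficient negative: compare with u = s*t
        have hcu : 0 ≤ (s * t - u) * (β * (β - 1) * A2 - 2 * M) :=
          mul_nonneg (by linarith) (by linarith)
        rcases le_total t s with hts | hst
        · have hA := caseA (β := β) hβ ht hts
          rw [div_mul_eq_mul_div, div_le_iff₀ hb] at hA
          have hMA : M = A2 := by rw [hMdef, hA2def, max_eq_left hts]
          rw [e1, e2] at hA
          rw [hMA]
          nlinarith [hA, hcu]
        · have hB := caseB (β := β) hβ hs hst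
          rw [div_mul_eq_mul_div, div_le_iff₀ hb] at hB
          have hMB : M = t ^ (β - 2) := by rw [hMdef, max_eq_right hst]
          rw [e1, e2] at hB
          rw [hMB] at hcu ⊢
          nlinarith [hB, hcu]
    rw [hmax,
      show (1/(β-1)) * M * (s^2 + t^2 - 2*u) = M * (s^2 + t^2 - 2*u)/(β-1) by ring,
      div_le_iff₀ hb]
    nlinarith [key]

/-- Convexity-type lower bound for
`G(q̃) - G(q) - ∇G(q)·(q̃ - q)`. -/
theorem stmt_12 (β : ℝ) (hβ : 2 ≤ β) (q qt : ℝ × ℝ) :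
    Gfun β qt - Gfun β q -
        ((gradG β q).1 * (qt.1 - q.1) + (gradG β q).2 * (qt.2 - q.2)) ≥
      (1 / (β - 1)) *
        max (_root_.enorm (pmap q) ^ (β - 2)) (_root_.enorm (pmap qt) ^ (β - 2)) *
        (((pmap q).1 - (pmap qt).1) ^ 2 + ((pmap q).2 - (pmap qt).2) ^ 2) := by
  have ha1 : 0 ≤ (pmap q).1 := le_max_right _ _
  have ha2 : 0 ≤ (pmap q).2 := le_max_right _ _
  have hb1 : 0 ≤ (pmap qt).1 := le_max_right _ _
  have hb2 : 0 ≤ (pmap qt).2 := le_max_right _ _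
  have hs : 0 ≤ _root_.enorm (pmap q) := Real.sqrt_nonneg _
  have ht : 0 ≤ _root_.enorm (pmap qt) := Real.sqrt_nonneg _
  have hs2 : (_root_.enorm (pmap q)) ^ 2 = (pmap q).1 ^ 2 + (pmap q).2 ^ 2 :=
    Real.sq_sqrt (by positivity)
  have ht2 : (_root_.enorm (pmap qt)) ^ 2 = (pmap qt).1 ^ 2 + (pmap qt).2 ^ 2 :=
    Real.sq_sqrt (by positivity)
  set u : ℝ := (pmap q).1 * (pmap qt).1 + (pmap q).2 * (pmap qt).2 with hudef
  have hu0 : 0 ≤ u := by positivity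
  have hust : u ≤ _root_.enorm (pmap q) * _root_.enorm (pmap qt) := by
    have hsq : u ^ 2 ≤ (_root_.enorm (pmap q) * _root_.enorm (pmap qt)) ^ 2 := by
      rw [mul_pow, hs2, ht2, hudef]
      nlinarith [sq_nonneg ((pmap q).1 * (pmap qt).2 - (pmap q).2 * (pmap qt).1)]
    nlinarith [hsq, mul_nonneg hs ht, hu0]
  have hG : ∀ r : ℝ × ℝ, Gfun β r = _root_.enorm (pmap r) ^ β := by
    intro r
    rw [Gfun, _root_.enorm, Real.sqrt_eq_rpow, ← Real.rpow_mul (by positivity)]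
    congr 1
    ring
  have hSB : 0 ≤ β * _root_.enorm (pmap q) ^ (β - 2) :=
    mul_nonneg (by linarith) (Real.rpow_nonneg hs _)
  have f1 : (pmap q).1 * (-qt.1) ≤ (pmap q).1 * (pmap qt).1 :=
    mul_le_mul_of_nonneg_left (le_max_left _ _) ha1
  have f3 : (pmap q).2 * qt.2 ≤ (pmap q).2 * (pmap qt).2 :=
    mul_le_mul_of_nonneg_left (le_max_left _ _) ha2
  have f2 : (pmap q).1 * q.1 = -((pmap q).1 ^ 2) := by
    show max (-q.1) 0 * q.1 = -(max (-q.1) 0) ^ 2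
    rcases le_total 0 (-q.1) with h | h
    · rw [max_eq_left h]; ring
    · rw [max_eq_right h]; ring
  have f4 : (pmap q).2 * q.2 = (pmap q).2 ^ 2 := by
    show max q.2 0 * q.2 = (max q.2 0) ^ 2
    rcases le_total 0 q.2 with h | h
    · rw [max_eq_left h]; ring
    · rw [max_eq_right h]; ring
  have hin : (-(pmap q).1) * (qt.1 - q.1) + (pmap q).2 * (qt.2 - q.2) ≤
      u - (_root_.enorm (pmap q)) ^ 2 := by
    rw [hs2, hudef]
    nlinarith [f1, f2, f3, f4]
  have hgrad : (gradG β q).1 * (qt.1 - q.1) + (gradG β q).2 * (qt.2 - q.2) ≤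
      β * _root_.enorm (pmap q) ^ (β - 2) * (u - (_root_.enorm (pmap q)) ^ 2) := by
    have := mul_le_mul_of_nonneg_left hin hSB
    calc (gradG β q).1 * (qt.1 - q.1) + (gradG β q).2 * (qt.2 - q.2)
        = β * _root_.enorm (pmap q) ^ (β - 2) *
          ((-(pmap q).1) * (qt.1 - q.1) + (pmap q).2 * (qt.2 - q.2)) := by
          rw [gradG]; ring
      _ ≤ _ := this
  have hstu := STU (β := β) (s := _root_.enorm (pmap q)) (t := _root_.enorm (pmap qt)) hβ hs ht hu0 hust
  have hdist : ((pmap q).1 - (pmap qt).1) ^ 2 + ((pmap q).2 - (pmap qt).2) ^ 2 =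
      (_root_.enorm (pmap q)) ^ 2 + (_root_.enorm (pmap qt)) ^ 2 - 2 * u := by
    rw [hs2, ht2, hudef]; ring
  rw [ge_iff_le, hdist, hG q, hG qt]
  refine le_trans hstu ?_
  linarith [hgrad]
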